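/- Fix p, q ∈ ℕ and set n = p + q. Then: (a) there exists a map σ : ℂl_n → ℂl_n that is ℝ-linear, multiplicative with σ 1 = 1, conjugate-linear over ℂ (σ (c • x) = (conj c) • σ x for all c ∈ ℂ), involutive (σ ∘ σ = id), and satisfies σ (ι e_j) = ι e_j for j < p and σ (ι e_j) = −ι e_j for p ≤ j < n, where (e_j) is the standard basis of Fin n → ℂ; (b) there is an injective ℝ-algebra homomorphism Ψ : Cl_{p,q} → ℂl_n (viewing ℂl_n as an ℝ-algebra by restriction of scalars) with Ψ (ι f_j) = ι e_j for j < p and Ψ (ι f_j) = Complex.I • ι e_j for p ≤ j < n, where (f_j) is the standard basis of Fin n → ℝ; and (c) the range of Ψ is exactly the set of fixed points {x ∈ ℂl_n | σ x = x}. -/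

import Mathlib

/-- The real quadratic form `Q_{p,q}` on `Fin (p+q) → ℝ`, given by
`Q_{p,q}(x) = ∑_{j<p} x_j² − ∑_{p≤j<p+q} x_j²`. -/
noncomputable def Qpq (p q : ℕ) : QuadraticForm ℝ (Fin (p + q) → ℝ) :=
  QuadraticMap.weightedSumSquares ℝ
    (fun j : Fin (p + q) => if (j : ℕ) < p then (1 : ℝ) else -1)

/-- The complex quadratic form `Q_nᶜ` on `Fin n → ℂ`, given by `Q_nᶜ(z) = ∑_{j<n} z_j²`. -/
noncomputable def Qc (n : ℕ) : QuadraticForm ℂ (Fin n → ℂ) :=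
  QuadraticMap.weightedSumSquares ℂ (fun _ : Fin n => (1 : ℂ))

open scoped TensorProduct
open CliffordAlgebra

set_option synthInstance.maxHeartbeats 1000000
set_option maxHeartbeats 1000000

noncomputable section RealStructureAux

namespace RealStructureAux

/-- scaling factor: `1` on the first `p` coordinates, `I` afterwards. -/
def s (p q : ℕ) (j : Fin (p + q)) : ℂ := if (j : ℕ) < p then 1 else Complex.I

/-- inverse scaling factor. -/
def t (p q : ℕ) (j : Fin (p + q)) : ℂ := if (j : ℕ) < p then 1 else -Complex.I

lemma t_mul_s (p q : ℕ) (j : Fin (p + q)) : t p q j * s p q j = 1 := by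
  unfold t s; split <;> simp [Complex.I_mul_I]

def ell (p q : ℕ) : (Fin (p + q) → ℝ) →ₗ[ℝ] (Fin (p + q) → ℂ) where
  toFun v := fun j => s p q j * (v j : ℂ)
  map_add' v w := funext fun j => by
    simp only [Pi.add_apply]; push_cast; ring
  map_smul' r v := funext fun j => by
    simp only [Pi.smul_apply, smul_eq_mul, RingHom.id_apply, Complex.real_smul]
    push_cast; ring

lemma ell_apply (p q : ℕ) (v : Fin (p + q) → ℝ) (j : Fin (p + q)) :
    ell p q v j = s p q j * (v j : ℂ) := rfl

/-- The `ℂ`-linear map `ℂ ⊗[ℝ] (Fin (p+q) → ℝ) → (Fin (p+q) → ℂ)`, `c ⊗ v ↦ c • ℓ v`. -/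
def g (p q : ℕ) : ℂ ⊗[ℝ] (Fin (p + q) → ℝ) →ₗ[ℂ] (Fin (p + q) → ℂ) :=
  (ell p q).liftBaseChange ℂ

lemma g_tmul (p q : ℕ) (c : ℂ) (v : Fin (p + q) → ℝ) (k : Fin (p + q)) :
    g p q (c ⊗ₜ[ℝ] v) k = c * (s p q k * (v k : ℂ)) := by
  rw [g, LinearMap.liftBaseChange_tmul]
  simp [ell_apply]

/-- The inverse map, `z ↦ ∑ j (t_j z_j) ⊗ f_j`. -/
def h (p q : ℕ) : (Fin (p + q) → ℂ) →ₗ[ℂ] ℂ ⊗[ℝ] (Fin (p + q) → ℝ) :=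
  ∑ j : Fin (p + q),
    (LinearMap.toSpanSingleton ℂ _ ((1 : ℂ) ⊗ₜ[ℝ] (Pi.single j (1 : ℝ)))).comp
      (t p q j • LinearMap.proj j)

lemma h_apply (p q : ℕ) (z : Fin (p + q) → ℂ) :
    h p q z = ∑ j : Fin (p + q), (t p q j * z j) ⊗ₜ[ℝ] (Pi.single j (1 : ℝ)) := by
  rw [h, LinearMap.sum_apply]
  refine Finset.sum_congr rfl fun j _ => ?_
  simp [LinearMap.toSpanSingleton_apply, TensorProduct.smul_tmul', smul_eq_mul]

lemma h_single (p q : ℕ) (j : Fin (p + q)) :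
    h p q (Pi.single j (1 : ℂ)) = t p q j ⊗ₜ[ℝ] (Pi.single j (1 : ℝ)) := by
  rw [h_apply, Finset.sum_eq_single j]
  · simp
  · intro k _ hk
    rw [Pi.single_eq_of_ne hk, mul_zero, TensorProduct.zero_tmul]
  · intro hj; exact absurd (Finset.mem_univ j) hj

lemma g_h (p q : ℕ) (z : Fin (p + q) → ℂ) : g p q (h p q z) = z := by
  rw [h_apply, map_sum]
  funext k
  rw [Finset.sum_apply, Finset.sum_eq_single k]
  · rw [g_tmul, Pi.single_eq_same]
    push_cast
    linear_combination z k * t_mul_s p q k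
  · intro j _ hj
    rw [g_tmul, Pi.single_eq_of_ne (Ne.symm hj)]
    push_cast; ring
  · intro hk; exact absurd (Finset.mem_univ k) hk

lemma h_g (p q : ℕ) (x : ℂ ⊗[ℝ] (Fin (p + q) → ℝ)) : h p q (g p q x) = x := by
  induction x with
  | zero => rw [map_zero, map_zero]
  | add a b ha hb => rw [map_add, map_add, ha, hb]
  | tmul c v =>
    rw [g, LinearMap.liftBaseChange_tmul, map_smul, h_apply]
    have key : ∀ j : Fin (p + q), (t p q j * ell p q v j) ⊗ₜ[ℝ] (Pi.single j (1 : ℝ))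
        = (1 : ℂ) ⊗ₜ[ℝ] (Pi.single j (v j) : Fin (p + q) → ℝ) := by
      intro j
      rw [ell_apply, ← mul_assoc, t_mul_s, one_mul]
      have h1 : ((v j : ℂ)) = (v j) • (1 : ℂ) := by
        rw [Complex.real_smul, mul_one]
      rw [h1, TensorProduct.smul_tmul]
      congr 1
      rw [← Pi.single_smul, smul_eq_mul, mul_one]
    simp_rw [key]
    rw [← TensorProduct.tmul_sum, Finset.univ_sum_single,
      TensorProduct.smul_tmul', smul_eq_mul, mul_one]

/-- The linear equivalence `(Fin (p+q) → ℂ) ≃ₗ[ℂ] ℂ ⊗[ℝ] (Fin (p+q) → ℝ)`. -/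
def E0 (p q : ℕ) : (Fin (p + q) → ℂ) ≃ₗ[ℂ] ℂ ⊗[ℝ] (Fin (p + q) → ℝ) :=
  LinearEquiv.ofLinear (h p q) (g p q)
    (LinearMap.ext (h_g p q)) (LinearMap.ext (g_h p q))

end RealStructureAux

end RealStructureAux

noncomputable section RealStructureAux2

namespace RealStructureAux

instance : Invertible (2 : ℝ) := invertibleOfNonzero two_ne_zero

lemma comp_eq_baseChange (p q : ℕ) :
    (Qc (p + q)).comp (g p q) = (Qpq p q).baseChange ℂ := by
  ext v
  rw [QuadraticMap.comp_apply, QuadraticForm.baseChange_tmul]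
  rw [show g p q ((1:ℂ) ⊗ₜ[ℝ] v) = ell p q v from by
    rw [g, LinearMap.liftBaseChange_tmul, one_smul]]
  rw [Qc, Qpq, QuadraticMap.weightedSumSquares_apply, QuadraticMap.weightedSumSquares_apply]
  rw [mul_one, Finset.sum_smul, ← Complex.ofReal_one]
  refine Finset.sum_congr rfl fun j _ => ?_
  rw [ell_apply, s]
  simp only [smul_eq_mul, Complex.real_smul, Complex.ofReal_one, one_mul]
  split_ifs with hj
  · push_cast; ring
  · push_cast; rw [show (Complex.I * ↑(v j)) * (Complex.I * ↑(v j)) =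
      (Complex.I * Complex.I) * (↑(v j) * ↑(v j)) from by ring, Complex.I_mul_I]
    ring

/-- The isometry between `Qc (p+q)` and the base change of `Qpq p q`. -/
def isom (p q : ℕ) : (Qc (p + q)).IsometryEquiv ((Qpq p q).baseChange ℂ) where
  toLinearEquiv := E0 p q
  map_app' z := by
    show (QuadraticForm.baseChange ℂ (Qpq p q)) (h p q z) = Qc (p + q) z
    rw [← comp_eq_baseChange p q, QuadraticMap.comp_apply, g_h]

instance : Invertible (2 : ℂ) := invertibleOfNonzero two_ne_zero

/-- The main algebra equivalence `ℂl_n ≃ₐ[ℂ] ℂ ⊗[ℝ] Cl_{p,q}`. -/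
def E (p q : ℕ) : CliffordAlgebra (Qc (p + q)) ≃ₐ[ℂ] ℂ ⊗[ℝ] CliffordAlgebra (Qpq p q) :=
  (CliffordAlgebra.equivOfIsometry (isom p q)).trans (CliffordAlgebra.equivBaseChange ℂ (Qpq p q))

lemma E_ι (p q : ℕ) (j : Fin (p + q)) :
    E p q (CliffordAlgebra.ι (Qc (p + q)) (Pi.single j (1 : ℂ)))
      = t p q j ⊗ₜ[ℝ] CliffordAlgebra.ι (Qpq p q) (Pi.single j (1 : ℝ)) := by
  rw [E, AlgEquiv.trans_apply, CliffordAlgebra.equivOfIsometry_apply,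
    CliffordAlgebra.map_apply_ι]
  have : (isom p q).toIsometry (Pi.single j (1 : ℂ)) = t p q j ⊗ₜ[ℝ] (Pi.single j (1 : ℝ)) := by
    show h p q (Pi.single j (1 : ℂ)) = _
    exact h_single p q j
  rw [this]
  exact CliffordAlgebra.toBaseChange_ι ℂ (Qpq p q) _ _

section Tensor

variable {B : Type*} [Ring B] [Algebra ℝ B]

/-- Real part of `ℂ ⊗[ℝ] B`. -/
def reT : ℂ ⊗[ℝ] B →ₗ[ℝ] B :=
  TensorProduct.lift ((LinearMap.lsmul ℝ B).comp Complex.reLm)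

/-- Imaginary part of `ℂ ⊗[ℝ] B`. -/
def imT : ℂ ⊗[ℝ] B →ₗ[ℝ] B :=
  TensorProduct.lift ((LinearMap.lsmul ℝ B).comp Complex.imLm)

@[simp] lemma reT_tmul (c : ℂ) (b : B) : reT (c ⊗ₜ[ℝ] b) = c.re • b := rfl
@[simp] lemma imT_tmul (c : ℂ) (b : B) : imT (c ⊗ₜ[ℝ] b) = c.im • b := rfl

/-- Conjugation on the left factor of `ℂ ⊗[ℝ] B`. -/
def sigma0 : ℂ ⊗[ℝ] B →ₐ[ℝ] ℂ ⊗[ℝ] B :=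
  Algebra.TensorProduct.map Complex.conjAe.toAlgHom (AlgHom.id ℝ B)

@[simp] lemma sigma0_tmul (c : ℂ) (b : B) :
    sigma0 (c ⊗ₜ[ℝ] b) = (starRingEnd ℂ) c ⊗ₜ[ℝ] b := rfl

lemma sigma0_sigma0 (x : ℂ ⊗[ℝ] B) : sigma0 (sigma0 x) = x := by
  induction x with
  | zero => rw [map_zero, map_zero]
  | add a b ha hb => rw [map_add, map_add, ha, hb]
  | tmul c b => rw [sigma0_tmul, sigma0_tmul, Complex.conj_conj]

lemma sigma0_smul (c : ℂ) (x : ℂ ⊗[ℝ] B) :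
    sigma0 (c • x) = (starRingEnd ℂ) c • sigma0 x := by
  induction x with
  | zero => rw [smul_zero, map_zero, smul_zero]
  | add a b ha hb => rw [smul_add, map_add, ha, hb, map_add, smul_add]
  | tmul a b =>
    rw [TensorProduct.smul_tmul', sigma0_tmul, sigma0_tmul, TensorProduct.smul_tmul',
      smul_eq_mul, smul_eq_mul, map_mul]

lemma reT_sigma0 (x : ℂ ⊗[ℝ] B) : reT (sigma0 x) = reT x := by
  induction x with
  | zero => simp
  | add a b ha hb => rw [map_add, map_add, map_add, ha, hb]
  | tmul c b => simp

lemma imT_sigma0 (x : ℂ ⊗[ℝ] B) : imT (sigma0 x) = - imT x := by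
  induction x with
  | zero => simp
  | add a b ha hb => rw [map_add, map_add, map_add, ha, hb, neg_add]
  | tmul c b => simp [neg_smul]

lemma decomp (x : ℂ ⊗[ℝ] B) :
    x = (1 : ℂ) ⊗ₜ[ℝ] reT x + Complex.I • ((1 : ℂ) ⊗ₜ[ℝ] imT x) := by
  induction x with
  | zero => simp
  | add a b ha hb =>
    rw [map_add, map_add, TensorProduct.tmul_add, TensorProduct.tmul_add, smul_add]
    conv_lhs => rw [ha, hb]
    abel
  | tmul c b =>
    rw [reT_tmul, imT_tmul, TensorProduct.smul_tmul']
    rw [show (1 : ℂ) ⊗ₜ[ℝ] (c.re • b) = (c.re • (1 : ℂ)) ⊗ₜ[ℝ] b from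
      (TensorProduct.smul_tmul _ _ _).symm]
    rw [show (Complex.I • (1:ℂ)) ⊗ₜ[ℝ] (c.im • b) = (c.im • (Complex.I • (1:ℂ))) ⊗ₜ[ℝ] b from
      (TensorProduct.smul_tmul _ _ _).symm]
    rw [← TensorProduct.add_tmul]
    congr 1
    rw [smul_eq_mul, mul_one, Complex.real_smul, Complex.real_smul]
    rw [mul_one]
    exact (Complex.re_add_im c).symm

lemma imT_I_one_tmul (b : B) : imT (Complex.I • ((1 : ℂ) ⊗ₜ[ℝ] b)) = b := by
  rw [TensorProduct.smul_tmul', smul_eq_mul, mul_one, imT_tmul, Complex.I_im, one_smul]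

lemma fixed_exists {x : ℂ ⊗[ℝ] B} (hx : sigma0 x = x) : x = (1 : ℂ) ⊗ₜ[ℝ] reT x := by
  have h1 := decomp x
  have h2 := decomp (sigma0 x)
  rw [reT_sigma0, imT_sigma0, hx] at h2
  have h3 : Complex.I • ((1 : ℂ) ⊗ₜ[ℝ] imT x) = Complex.I • ((1 : ℂ) ⊗ₜ[ℝ] (- imT x)) := by
    have := h1.symm.trans h2
    exact add_left_cancel this
  have h4 : imT x = - imT x := by
    have := congrArg imT h3
    rwa [imT_I_one_tmul, imT_I_one_tmul] at this
  have h5 : imT x = 0 := by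
    have h6 : (2 : ℝ) • imT x = 0 := by
      rw [two_smul]
      exact eq_neg_iff_add_eq_zero.mp h4
    have := congrArg (fun y => (2 : ℝ)⁻¹ • y) h6
    simpa [smul_smul] using this
  rw [h5, TensorProduct.tmul_zero, smul_zero, add_zero] at h1
  exact h1

end Tensor

lemma t_of_lt (p q : ℕ) (j : Fin (p + q)) (h : (j : ℕ) < p) : t p q j = 1 := if_pos h
lemma t_of_ge (p q : ℕ) (j : Fin (p + q)) (h : p ≤ (j : ℕ)) : t p q j = -Complex.I :=
  if_neg (not_lt.mpr h)

/-- The embedding `Cl_{p,q} → ℂl_n`. -/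
def Psi (p q : ℕ) : CliffordAlgebra (Qpq p q) →ₐ[ℝ] CliffordAlgebra (Qc (p + q)) :=
  ((E p q).symm.toAlgHom.restrictScalars ℝ).comp
    (Algebra.TensorProduct.includeRight (R := ℝ) (A := ℂ))

lemma Psi_apply (p q : ℕ) (b : CliffordAlgebra (Qpq p q)) :
    Psi p q b = (E p q).symm ((1 : ℂ) ⊗ₜ[ℝ] b) := rfl

lemma Esymm_t_tmul (p q : ℕ) (j : Fin (p + q)) :
    (E p q).symm (t p q j ⊗ₜ[ℝ] CliffordAlgebra.ι (Qpq p q) (Pi.single j (1 : ℝ)))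
      = CliffordAlgebra.ι (Qc (p + q)) (Pi.single j (1 : ℂ)) := by
  rw [← E_ι p q j, AlgEquiv.symm_apply_apply]

end RealStructureAux

end RealStructureAux2

open RealStructureAux

/-- For `n = p + q`: (a) there is a Real structure `σ` on `ℂl_n`, i.e. an
ℝ-linear, multiplicative, unital, conjugate-linear involution fixing `ι e_j` for `j < p` and
negating `ι e_j` for `p ≤ j < n`; (b) there is an injective ℝ-algebra homomorphism
`Ψ : Cl_{p,q} → ℂl_n` with `Ψ (ι f_j) = ι e_j` for `j < p` and `Ψ (ι f_j) = I • ι e_j` for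
`p ≤ j < n`; (c) the range of `Ψ` is exactly the set of `σ`-fixed points. -/
theorem real_structure_on_complex_clifford (p q : ℕ) :
    ∃ σ : CliffordAlgebra (Qc (p + q)) → CliffordAlgebra (Qc (p + q)),
      (∀ x y, σ (x + y) = σ x + σ y) ∧
      (∀ (r : ℝ) (x), σ (r • x) = r • σ x) ∧
      (∀ x y, σ (x * y) = σ x * σ y) ∧
      σ 1 = 1 ∧
      (∀ (c : ℂ) (x), σ (c • x) = (starRingEnd ℂ) c • σ x) ∧
      (∀ x, σ (σ x) = x) ∧
      (∀ j : Fin (p + q), (j : ℕ) < p →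
        σ (CliffordAlgebra.ι (Qc (p + q)) (Pi.single j (1 : ℂ))) =
          CliffordAlgebra.ι (Qc (p + q)) (Pi.single j (1 : ℂ))) ∧
      (∀ j : Fin (p + q), p ≤ (j : ℕ) →
        σ (CliffordAlgebra.ι (Qc (p + q)) (Pi.single j (1 : ℂ))) =
          -CliffordAlgebra.ι (Qc (p + q)) (Pi.single j (1 : ℂ))) ∧
      ∃ Ψ : CliffordAlgebra (Qpq p q) →ₐ[ℝ] CliffordAlgebra (Qc (p + q)),
        Function.Injective Ψ ∧
        (∀ j : Fin (p + q), (j : ℕ) < p →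
          Ψ (CliffordAlgebra.ι (Qpq p q) (Pi.single j (1 : ℝ))) =
            CliffordAlgebra.ι (Qc (p + q)) (Pi.single j (1 : ℂ))) ∧
        (∀ j : Fin (p + q), p ≤ (j : ℕ) →
          Ψ (CliffordAlgebra.ι (Qpq p q) (Pi.single j (1 : ℝ))) =
            Complex.I • CliffordAlgebra.ι (Qc (p + q)) (Pi.single j (1 : ℂ))) ∧
        Set.range Ψ = {x | σ x = x} := by
  set σ : CliffordAlgebra (Qc (p + q)) → CliffordAlgebra (Qc (p + q)) :=
    fun x => (E p q).symm (sigma0 ((E p q) x)) with hσ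
  have hconj : ∀ (c : ℂ) (x), σ (c • x) = (starRingEnd ℂ) c • σ x := by
    intro c x
    rw [hσ]
    simp only
    rw [map_smul, sigma0_smul, map_smul]
  refine ⟨σ, ?_, ?_, ?_, ?_, hconj, ?_, ?_, ?_, ?_⟩
  · intro x y; simp only [hσ, map_add]
  · intro r x
    have h1 : r • x = (algebraMap ℝ ℂ r) • x := (algebraMap_smul ℂ r x).symm
    have h2 : r • σ x = (algebraMap ℝ ℂ r) • σ x := (algebraMap_smul ℂ r (σ x)).symm
    rw [h1, h2, hconj]
    congr 1
    exact Complex.conj_ofReal r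
  · intro x y; simp only [hσ, map_mul]
  · simp only [hσ, map_one]
  · intro x
    simp only [hσ, AlgEquiv.apply_symm_apply]
    rw [sigma0_sigma0, AlgEquiv.symm_apply_apply]
  · intro j hj
    simp only [hσ]
    rw [E_ι, sigma0_tmul, t_of_lt p q j hj, map_one]
    have := Esymm_t_tmul p q j
    rwa [t_of_lt p q j hj] at this
  · intro j hj
    simp only [hσ]
    rw [E_ι, sigma0_tmul, t_of_ge p q j hj]
    rw [show (starRingEnd ℂ) (-Complex.I) = Complex.I by simp]
    rw [show (Complex.I : ℂ) ⊗ₜ[ℝ] CliffordAlgebra.ι (Qpq p q) (Pi.single j (1 : ℝ))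
        = -((-Complex.I) ⊗ₜ[ℝ] CliffordAlgebra.ι (Qpq p q) (Pi.single j (1 : ℝ))) from by
      rw [← TensorProduct.neg_tmul, neg_neg]]
    rw [map_neg, ← t_of_ge p q j hj, Esymm_t_tmul]
  · refine ⟨Psi p q, ?_, ?_, ?_, ?_⟩
    · intro a b hab
      rw [Psi_apply, Psi_apply] at hab
      have h1 := (E p q).symm.injective hab
      have h2 := congrArg (reT (B := CliffordAlgebra (Qpq p q))) h1
      rwa [reT_tmul, reT_tmul, Complex.one_re, one_smul, one_smul] at h2
    · intro j hj
      rw [Psi_apply]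
      have := Esymm_t_tmul p q j
      rwa [t_of_lt p q j hj] at this
    · intro j hj
      have key : CliffordAlgebra.ι (Qc (p + q)) (Pi.single j (1 : ℂ))
          = (-Complex.I) • Psi p q (CliffordAlgebra.ι (Qpq p q) (Pi.single j (1 : ℝ))) := by
        rw [Psi_apply, ← map_smul, TensorProduct.smul_tmul', smul_eq_mul, mul_one,
          ← t_of_ge p q j hj, Esymm_t_tmul]
      rw [key, smul_smul, mul_neg, Complex.I_mul_I, neg_neg, one_smul]
    · ext x
      simp only [Set.mem_range, Set.mem_setOf_eq]
      constructor
      · rintro ⟨b, rfl⟩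
        simp only [hσ, Psi_apply, AlgEquiv.apply_symm_apply]
        rw [sigma0_tmul, map_one]
      · intro hx
        have h1 : sigma0 ((E p q) x) = (E p q) x := by
          have := congrArg (E p q) hx
          rwa [AlgEquiv.apply_symm_apply] at this
        have h2 := fixed_exists h1
        refine ⟨reT ((E p q) x), ?_⟩
        rw [Psi_apply, ← h2, AlgEquiv.symm_apply_apply]
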